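/- Let q ≥ 2 and let λ = (n-1, 1) ⊢ n. Then the multiplicity m^{(q)}_{χ_λ} = ⟨r_q, χ_λ⟩ of χ_λ in the q-th root number function equals τ(q) - 1 for all sufficiently large n, where τ(q) is the number of divisors of q. -/

import Mathlib

/-- `s_1(π)`: the number of fixed points of a permutation. -/
def fixCount {n : ℕ} (π : Equiv.Perm (Fin n)) : ℕ :=
  (Finset.univ.filter fun x => π x = x).card

open Equiv Finset Function

section Aux

variable {α : Type*} [Fintype α] [DecidableEq α]

/-- Permutations that agree with a prescribed bijection on `p` are in bijection with
permutations of the complement of `p`. -/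
lemma card_perm_fix (p : α → Prop) [DecidablePred p] (e₀ : Equiv.Perm {a // p a}) :
    Fintype.card {π : Equiv.Perm α // ∀ a (h : p a), π a = (e₀ ⟨a, h⟩ : α)}
      = Fintype.card (Equiv.Perm {a // ¬ p a}) := by
  have key : ∀ π : Equiv.Perm α, (∀ a (h : p a), π a = (e₀ ⟨a, h⟩ : α)) →
      ∀ a, ¬ p a ↔ ¬ p (π a) := by
    intro π hπ a
    constructor
    · intro ha hpa
      obtain ⟨b, hb⟩ := e₀.surjective ⟨π a, hpa⟩
      have hπb : π b = π a := by
        rw [hπ b b.2, hb]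
      exact ha ((π.injective hπb) ▸ b.2)
    · intro ha hpa
      exact ha (by rw [hπ a hpa]; exact (e₀ ⟨a, hpa⟩).2)
  refine Fintype.card_congr
    ⟨fun π => π.1.subtypePerm (fun a => (key π.1 π.2 a).symm),
     fun ρ => ⟨e₀.subtypeCongr ρ, fun a h => Equiv.Perm.subtypeCongr.left_apply _ _ h⟩,
     ?_, ?_⟩
  · intro π
    apply Subtype.ext
    apply Equiv.ext
    intro a
    by_cases h : p a
    · rw [Equiv.Perm.subtypeCongr.left_apply _ _ h, (π.2 a h).symm]
    · rw [Equiv.Perm.subtypeCongr.right_apply _ _ h]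
      rfl
  · intro ρ
    apply Equiv.ext
    intro a
    apply Subtype.ext
    show ((e₀.subtypeCongr ρ) a.1 : α) = (ρ a : α)
    rw [Equiv.Perm.subtypeCongr.right_apply _ _ a.2]

/-- The number of permutations realizing a prescribed injective "partial pattern"
`f i ↦ f (e i)` is `(card α - d)!`. -/
lemma card_perm_pattern {d : ℕ} (f : Fin d → α) (hf : Function.Injective f)
    (e : Equiv.Perm (Fin d)) :
    Fintype.card {π : Equiv.Perm α // ∀ i, π (f i) = f (e i)}
      = (Fintype.card α - d).factorial := by
  classical
  set p : α → Prop := fun a => a ∈ Set.range f with hp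
  let e₀ : Equiv.Perm {a // p a} := (Equiv.ofInjective f hf).permCongr e
  have hsymm : ∀ (i : Fin d) (h : p (f i)), (Equiv.ofInjective f hf).symm ⟨f i, h⟩ = i := by
    intro i h
    apply (Equiv.ofInjective f hf).injective
    rw [Equiv.apply_symm_apply]
    rfl
  have he₀ : ∀ (i : Fin d) (h : p (f i)), (e₀ ⟨f i, h⟩ : α) = f (e i) := by
    intro i h
    show ((Equiv.ofInjective f hf).permCongr e ⟨f i, h⟩ : α) = f (e i)
    rw [Equiv.permCongr_apply, hsymm i h]
    rfl
  have hiff : ∀ π : Equiv.Perm α,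
      (∀ i, π (f i) = f (e i)) ↔ (∀ a (h : p a), π a = (e₀ ⟨a, h⟩ : α)) := by
    intro π
    constructor
    · rintro h a ⟨i, rfl⟩
      rw [he₀ i ⟨i, rfl⟩]
      exact h i
    · intro h i
      rw [h (f i) ⟨i, rfl⟩, he₀ i ⟨i, rfl⟩]
  have := card_perm_fix p e₀
  rw [Fintype.card_congr (Equiv.subtypeEquivRight hiff), this, Fintype.card_perm]
  congr 1
  rw [Fintype.card_subtype_compl]
  congr 1
  have : Fintype.card {a // p a} = Fintype.card (Set.range f) := Fintype.card_congr (Equiv.refl _)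
  rw [this, Set.card_range_of_injective hf, Fintype.card_fin]

end Aux

lemma perm_isPeriodic {n : ℕ} (π : Equiv.Perm (Fin n)) (x : Fin n) (m : ℕ)
    (h : (π ^ m) x = x) : Function.IsPeriodicPt ⇑π m x := by
  show (⇑π)^[m] x = x
  rw [Equiv.Perm.iterate_eq_pow]
  exact h

/-- The number of permutations of `Fin n` for which a given point has orbit of
size exactly `d` (with `1 ≤ d ≤ n`) is `(n-1)!`. -/
lemma card_minPeriod {n d : ℕ} (hd : 0 < d) (hdn : d ≤ n) (x : Fin n) :
    (Finset.univ.filter fun π : Equiv.Perm (Fin n) =>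
      Function.minimalPeriod ⇑π x = d).card = (n - 1).factorial := by
  classical
  obtain ⟨d, rfl⟩ := Nat.exists_eq_succ_of_ne_zero hd.ne'
  set D := d + 1 with hD
  have hDpos : 0 < D := Nat.succ_pos d
  have hrot : ∀ i : Fin D, (finRotate D i : Fin D).val = (i.val + 1) % D := by
    intro i
    rw [finRotate_succ_apply, Fin.add_def]
    exact Nat.ModEq.add_left i.val (Nat.mod_modEq 1 D)
  -- the tuple map
  set g : Equiv.Perm (Fin n) → (Fin D → Fin n) := fun π i => (π ^ (i : ℕ)) x with hg
  set T : Finset (Fin D → Fin n) :=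
    Finset.univ.filter (fun f => Function.Injective f ∧ f 0 = x) with hT
  -- key characterization of fibers
  have key : ∀ (f : Fin D → Fin n), Function.Injective f → f 0 = x →
      ∀ π : Equiv.Perm (Fin n),
      ((Function.minimalPeriod ⇑π x = D ∧ g π = f) ↔ ∀ i, π (f i) = f (finRotate D i)) := by
    intro f hfi hf0 π
    constructor
    · rintro ⟨hmin, rfl⟩
      intro i
      have hper : Function.IsPeriodicPt ⇑π D x := by
        rw [← hmin]; exact Function.isPeriodicPt_minimalPeriod ⇑π x
      have h1 : π (g π i) = (π ^ (i.val + 1)) x := by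
        rw [hg]
        simp only []
        rw [pow_succ']
        rfl
      have h2 : (π ^ ((i.val + 1) % D)) x = (π ^ (i.val + 1)) x := by
        have := hper.iterate_mod_apply (i.val + 1)
        rw [Equiv.Perm.iterate_eq_pow, Equiv.Perm.iterate_eq_pow] at this
        exact this
      rw [h1, ← h2]
      show _ = g π (finRotate D i)
      rw [hg]
      exact congrArg (fun t => (π ^ t) x) (hrot i).symm
    · intro hcyc
      have hkey : ∀ k : ℕ, (π ^ k) x = f ⟨k % D, Nat.mod_lt _ hDpos⟩ := by
        intro k
        induction k with
        | zero =>
          rw [pow_zero]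
          have : (⟨0 % D, Nat.mod_lt _ hDpos⟩ : Fin D) = 0 := by
            apply Fin.ext
            simp
          rw [this, hf0]
          rfl
        | succ k ih =>
          have h1 : (π ^ (k + 1)) x = π ((π ^ k) x) := by
            rw [pow_succ']
            rfl
          rw [h1, ih, hcyc]
          congr 1
          apply Fin.ext
          rw [hrot]
          show ((k % D) + 1) % D = (k + 1) % D
          exact Nat.ModEq.add_right 1 (Nat.mod_modEq k D)
      have hper : Function.IsPeriodicPt ⇑π D x := by
        apply perm_isPeriodic
        rw [hkey D]
        have : (⟨D % D, Nat.mod_lt _ hDpos⟩ : Fin D) = 0 := by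
          apply Fin.ext
          simp
        rw [this, hf0]
      have hdvd : Function.minimalPeriod ⇑π x ∣ D := hper.minimalPeriod_dvd
      have hmin : Function.minimalPeriod ⇑π x = D := by
        rcases Nat.lt_or_ge (Function.minimalPeriod ⇑π x) D with hlt | hge
        · exfalso
          set m := Function.minimalPeriod ⇑π x with hm
          have hm0 : m ≠ 0 := by
            intro h0
            rw [h0] at hdvd
            exact hDpos.ne' (Nat.eq_zero_of_zero_dvd hdvd)
          have hmx : (π ^ m) x = x := by
            have := Function.isPeriodicPt_minimalPeriod ⇑π x
            rw [← hm] at this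
            have h2 := this
            rw [show Function.IsPeriodicPt ⇑π m x ↔ (⇑π)^[m] x = x from Iff.rfl,
              Equiv.Perm.iterate_eq_pow] at h2
            exact h2
          rw [hkey m] at hmx
          rw [← hf0] at hmx
          have := hfi hmx
          have hmval : m % D = 0 := congrArg Fin.val this
          rw [Nat.mod_eq_of_lt hlt] at hmval
          exact hm0 hmval
        · exact Nat.le_antisymm (Nat.le_of_dvd hDpos hdvd) hge
      refine ⟨hmin, ?_⟩
      funext i
      rw [hg]
      show (π ^ (i.val)) x = f i
      rw [hkey i.val]
      congr 1
      apply Fin.ext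
      exact Nat.mod_eq_of_lt i.isLt
  -- fiberwise counting
  have hmaps : ∀ π ∈ (Finset.univ.filter fun π : Equiv.Perm (Fin n) =>
      Function.minimalPeriod ⇑π x = D), g π ∈ T := by
    intro π hπ
    rw [Finset.mem_filter] at hπ
    obtain ⟨-, hmin⟩ := hπ
    rw [hT, Finset.mem_filter]
    refine ⟨Finset.mem_univ _, ?_, ?_⟩
    · -- injectivity of the tuple
      have aux : ∀ i j : ℕ, i ≤ j → j - i < D → (π ^ i) x = (π ^ j) x → i = j := by
        intro i j hij hlt heq
        have h1 : (π ^ j) x = (π ^ i) ((π ^ (j - i)) x) := by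
          rw [← Equiv.Perm.mul_apply, ← pow_add]
          congr 2
          omega
        rw [h1] at heq
        have h2 : (π ^ (j - i)) x = x := ((π ^ i).injective heq).symm
        have h3 : Function.minimalPeriod ⇑π x ∣ (j - i) :=
          (perm_isPeriodic π x _ h2).minimalPeriod_dvd
        rw [hmin] at h3
        have : j - i = 0 := Nat.eq_zero_of_dvd_of_lt h3 hlt |>.symm ▸ rfl
        omega
      intro i j hij
      rw [hg] at hij
      have : (i : ℕ) = (j : ℕ) := by
        rcases Nat.le_total (i : ℕ) (j : ℕ) with h | h
        · exact aux i j h (by omega) hij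
        · exact (aux j i h (by omega) hij.symm).symm
      exact Fin.ext this
    · rw [hg]
      show (π ^ (0 : ℕ)) x = x
      rw [pow_zero]
      rfl
  rw [Finset.card_eq_sum_card_fiberwise hmaps]
  have hfib : ∀ f ∈ T, ((Finset.univ.filter fun π : Equiv.Perm (Fin n) =>
      Function.minimalPeriod ⇑π x = D).filter fun π => g π = f).card = (n - D).factorial := by
    intro f hf
    rw [hT, Finset.mem_filter] at hf
    obtain ⟨-, hfi, hf0⟩ := hf
    have hchar : ((Finset.univ.filter fun π : Equiv.Perm (Fin n) =>
        Function.minimalPeriod ⇑π x = D).filter fun π => g π = f)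
        = Finset.univ.filter fun π : Equiv.Perm (Fin n) => ∀ i, π (f i) = f (finRotate D i) := by
      ext π
      simp only [Finset.mem_filter, Finset.mem_univ, true_and]
      rw [and_comm (a := Function.minimalPeriod ⇑π x = D)]
      constructor
      · rintro ⟨h1, h2⟩
        exact (key f hfi hf0 π).mp ⟨h2, h1⟩
      · intro h
        obtain ⟨h1, h2⟩ := (key f hfi hf0 π).mpr h
        exact ⟨h2, h1⟩
    rw [hchar]
    have := card_perm_pattern f hfi (finRotate D)
    rw [Fintype.card_fin] at this
    rw [← this]
    rw [Fintype.card_subtype]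
  rw [Finset.sum_congr rfl hfib, Finset.sum_const, smul_eq_mul]
  -- now count T
  have hcardT : T.card = (n - 1).descFactorial d := by
    -- fibers over the value at 0
    classical
    set S : Finset (Fin D → Fin n) := Finset.univ.filter (fun f => Function.Injective f) with hS
    have hSc : S.card = n.descFactorial D := by
      rw [hS, ← Fintype.card_subtype]
      rw [Fintype.card_congr (Equiv.subtypeInjectiveEquivEmbedding (Fin D) (Fin n))]
      rw [Fintype.card_embedding_eq, Fintype.card_fin, Fintype.card_fin]
    have hmaps2 : ∀ f ∈ S, f 0 ∈ (Finset.univ : Finset (Fin n)) :=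
      fun f _ => Finset.mem_univ _
    have hSsum : S.card = ∑ y : Fin n, (S.filter fun f => f 0 = y).card :=
      Finset.card_eq_sum_card_fiberwise hmaps2
    have hfibeq : ∀ y : Fin n, (S.filter fun f => f 0 = y).card
        = (S.filter fun f => f 0 = x).card := by
      intro y
      apply Finset.card_bij' (fun f _ => (Equiv.swap y x) ∘ f) (fun f _ => (Equiv.swap y x) ∘ f)
      · intro f hf
        rw [Finset.mem_filter] at hf ⊢
        refine ⟨?_, ?_⟩
        · rw [hS, Finset.mem_filter]
          exact ⟨Finset.mem_univ _, (Equiv.injective _).comp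
            ((Finset.mem_filter.mp hf.1).2)⟩
        · show Equiv.swap y x (f 0) = x
          rw [hf.2, Equiv.swap_apply_left]
      · intro f hf
        rw [Finset.mem_filter] at hf ⊢
        refine ⟨?_, ?_⟩
        · rw [hS, Finset.mem_filter]
          exact ⟨Finset.mem_univ _, (Equiv.injective _).comp
            ((Finset.mem_filter.mp hf.1).2)⟩
        · show Equiv.swap y x (f 0) = y
          rw [hf.2, Equiv.swap_apply_right]
      · intro f _
        funext i
        show Equiv.swap y x (Equiv.swap y x (f i)) = f i
        rw [Equiv.swap_apply_self]
      · intro f _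
        funext i
        show Equiv.swap y x (Equiv.swap y x (f i)) = f i
        rw [Equiv.swap_apply_self]
    have hTS : T = S.filter fun f => f 0 = x := by
      rw [hT, hS, Finset.filter_filter]
    have hn0 : 0 < n := lt_of_lt_of_le hd hdn
    have hnD : n * T.card = n * (n - 1).descFactorial d := by
      have h1 : n * T.card = n.descFactorial D := by
        rw [← hSc, hSsum, hTS]
        rw [Finset.sum_congr rfl (fun y _ => hfibeq y)]
        rw [Finset.sum_const, Finset.card_univ, Fintype.card_fin, smul_eq_mul]
      rw [h1, hD]
      obtain ⟨n', rfl⟩ := Nat.exists_eq_succ_of_ne_zero hn0.ne'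
      rw [Nat.succ_descFactorial_succ, Nat.succ_sub_one]
    exact Nat.eq_of_mul_eq_mul_left hn0 hnD
  rw [hcardT]
  have : (n - D) = (n - 1) - d := by rw [hD, Nat.sub_sub, Nat.add_comm d 1]
  rw [this]
  have hd' : d ≤ n - 1 := Nat.le_pred_of_lt hdn
  rw [mul_comm]
  exact Nat.factorial_mul_descFactorial hd'

/-- For `1 ≤ q ≤ n` and any `x`, the number of `π` with `π^q x = x` is `τ(q)·(n-1)!`. -/
lemma card_pow_fix {n q : ℕ} (hq : 0 < q) (hn : q ≤ n) (x : Fin n) :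
    (Finset.univ.filter fun π : Equiv.Perm (Fin n) => (π ^ q) x = x).card
      = q.divisors.card * (n - 1).factorial := by
  classical
  have hmaps : ∀ π ∈ (Finset.univ.filter fun π : Equiv.Perm (Fin n) => (π ^ q) x = x),
      Function.minimalPeriod ⇑π x ∈ q.divisors := by
    intro π hπ
    rw [Finset.mem_filter] at hπ
    rw [Nat.mem_divisors]
    exact ⟨(perm_isPeriodic π x q hπ.2).minimalPeriod_dvd, hq.ne'⟩
  rw [Finset.card_eq_sum_card_fiberwise hmaps]
  have hfib : ∀ d ∈ q.divisors,
      ((Finset.univ.filter fun π : Equiv.Perm (Fin n) => (π ^ q) x = x).filter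
        fun π : Equiv.Perm (Fin n) => Function.minimalPeriod ⇑π x = d).card = (n - 1).factorial := by
    intro d hd
    rw [Nat.mem_divisors] at hd
    have hd0 : 0 < d := Nat.pos_of_dvd_of_pos hd.1 hq
    have hdn : d ≤ n := le_trans (Nat.le_of_dvd hq hd.1) hn
    have hchar : ((Finset.univ.filter fun π : Equiv.Perm (Fin n) => (π ^ q) x = x).filter
        fun π : Equiv.Perm (Fin n) => Function.minimalPeriod ⇑π x = d)
        = Finset.univ.filter fun π : Equiv.Perm (Fin n) =>
            Function.minimalPeriod ⇑π x = d := by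
      ext π
      simp only [Finset.mem_filter, Finset.mem_univ, true_and]
      constructor
      · rintro ⟨-, h⟩; exact h
      · intro h
        refine ⟨?_, h⟩
        have : Function.IsPeriodicPt ⇑π q x := by
          rw [Function.isPeriodicPt_iff_minimalPeriod_dvd, h]
          exact hd.1
        have h2 : (⇑π)^[q] x = x := this
        rw [Equiv.Perm.iterate_eq_pow] at h2
        exact h2
    rw [hchar]
    exact card_minPeriod hd0 hdn x
  rw [Finset.sum_congr rfl hfib, Finset.sum_const, smul_eq_mul]

/-- for `q ≥ 2` and `λ = (n-1,1)`, the multiplicity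
`m^{(q)}_{χ_λ} = (1/n!) Σ_{π ∈ S_n} χ_λ(π^q)` of `χ_λ` in the `q`-th root number
function, where `χ_λ(π) = s_1(π) - 1`, equals `τ(q) - 1` for all sufficiently
large `n`. -/
theorem stmt17 (q : ℕ) (hq : 2 ≤ q) :
    ∃ N : ℕ, ∀ n : ℕ, N ≤ n →
      (n.factorial : ℝ)⁻¹ * ∑ π : Equiv.Perm (Fin n), ((fixCount (π ^ q) : ℝ) - 1)
        = (q.divisors.card : ℝ) - 1 := by
  classical
  refine ⟨q, fun n hn => ?_⟩
  have hq0 : 0 < q := by omega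
  have hn0 : 0 < n := by omega
  -- main counting identity over ℕ
  have hmain : ∑ π : Equiv.Perm (Fin n), fixCount (π ^ q)
      = q.divisors.card * n.factorial := by
    have h1 : ∀ π : Equiv.Perm (Fin n), fixCount (π ^ q)
        = ∑ x : Fin n, if (π ^ q) x = x then 1 else 0 := by
      intro π
      rw [fixCount, Finset.card_filter]
    rw [Finset.sum_congr rfl (fun π _ => h1 π), Finset.sum_comm]
    have h2 : ∀ x : Fin n, (∑ π : Equiv.Perm (Fin n), if (π ^ q) x = x then 1 else 0)
        = q.divisors.card * (n - 1).factorial := by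
      intro x
      rw [← Finset.card_filter]
      exact card_pow_fix hq0 hn x
    rw [Finset.sum_congr rfl (fun x _ => h2 x), Finset.sum_const, Finset.card_univ,
      Fintype.card_fin, smul_eq_mul, ← mul_assoc, mul_comm n, mul_assoc,
      Nat.mul_factorial_pred hn0.ne']
  -- move to ℝ
  have hcard : ∑ π : Equiv.Perm (Fin n), ((fixCount (π ^ q) : ℝ) - 1)
      = (q.divisors.card : ℝ) * n.factorial - n.factorial := by
    rw [Finset.sum_sub_distrib, Finset.sum_const, Finset.card_univ, Fintype.card_perm,
      Fintype.card_fin, ← Nat.cast_sum, hmain]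
    push_cast
    ring
  rw [hcard]
  have hfac : (n.factorial : ℝ) ≠ 0 := Nat.cast_ne_zero.mpr (Nat.factorial_pos n).ne'
  field_simp
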